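/- Let A ⊆ ℝⁿ be a bounded closed set with 0 ∈ A ⊆ B₁ and Ω := ℝⁿ \ A. Let u be continuous on the closure of Ω and infinity harmonic in Ω with limsup_{x→∞} |u(x)|/|x| < +∞. Then S_∞ = limsup_{x→∞} |u(x)|/|x| < +∞, and m⁻ − S⁻_∞|x| ≤ u(x) ≤ m⁺ + S⁺_∞|x| for all x ∈ Ω. -/

import Mathlib

open Metric Set Filter Bornology Topology
open scoped RealInnerProductSpace

noncomputable section

/-- Euclidean space ℝⁿ. -/
abbrev Euc (n : ℕ) := EuclideanSpace ℝ (Fin n)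

/-- Comparison with cones from above (infinity subharmonic). -/
def CmpAbove {n : ℕ} (Ω : Set (Euc n)) (u : Euc n → ℝ) : Prop :=
  ∀ V : Set (Euc n), IsOpen V → IsBounded V → closure V ⊆ Ω →
    ∀ (x₀ : Euc n) (a b : ℝ),
      (∀ x ∈ frontier (V \ {x₀}), u x ≤ a * ‖x - x₀‖ + b) →
      ∀ x ∈ V, u x ≤ a * ‖x - x₀‖ + b

/-- Comparison with cones from below (infinity superharmonic). -/
def CmpBelow {n : ℕ} (Ω : Set (Euc n)) (u : Euc n → ℝ) : Prop :=
  ∀ V : Set (Euc n), IsOpen V → IsBounded V → closure V ⊆ Ω →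
    ∀ (x₀ : Euc n) (a b : ℝ),
      (∀ x ∈ frontier (V \ {x₀}), a * ‖x - x₀‖ + b ≤ u x) →
      ∀ x ∈ V, a * ‖x - x₀‖ + b ≤ u x

/-- Infinity harmonic = comparison with cones from both sides. -/
def InfHarmonic {n : ℕ} (Ω : Set (Euc n)) (u : Euc n → ℝ) : Prop :=
  CmpAbove Ω u ∧ CmpBelow Ω u

/-- m⁺ = max of u on ∂Ω. -/
def mP {n : ℕ} (Ω : Set (Euc n)) (u : Euc n → ℝ) : ℝ := sSup (u '' frontier Ω)

/-- m⁻ = min of u on ∂Ω. -/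
def mM {n : ℕ} (Ω : Set (Euc n)) (u : Euc n → ℝ) : ℝ := sInf (u '' frontier Ω)

/-- S⁺_r := (max(max_{∂B_r} u, m⁺) − m⁺)/r. -/
def SP {n : ℕ} (Ω : Set (Euc n)) (u : Euc n → ℝ) (r : ℝ) : ℝ :=
  (max (sSup (u '' sphere (0 : Euc n) r)) (mP Ω u) - mP Ω u) / r

/-- S⁻_r := (m⁻ − min(min_{∂B_r} u, m⁻))/r. -/
def SM {n : ℕ} (Ω : Set (Euc n)) (u : Euc n → ℝ) (r : ℝ) : ℝ :=
  (mM Ω u - min (sInf (u '' sphere (0 : Euc n) r)) (mM Ω u)) / r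

/-- Lip(u, S) := sup_{x≠y ∈ S} |u(x) − u(y)|/|x − y|. -/
def lipOn {n : ℕ} (u : Euc n → ℝ) (S : Set (Euc n)) : ℝ :=
  sSup ((fun p : Euc n × Euc n => |u p.1 - u p.2| / ‖p.1 - p.2‖) ''
    {p : Euc n × Euc n | p.1 ∈ S ∧ p.2 ∈ S ∧ p.1 ≠ p.2})

lemma sphere_sub_cl {n : ℕ} {A : Set (Euc n)} (hA1 : A ⊆ ball 0 1) {r : ℝ} (hr : 1 ≤ r) :
    sphere (0 : Euc n) r ⊆ closure Aᶜ := by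
  intro z hz
  apply subset_closure
  intro hzA
  have := hA1 hzA
  rw [mem_ball_zero_iff] at this
  rw [mem_sphere_zero_iff_norm] at hz
  linarith


lemma SP_nonneg {n : ℕ} (Ω : Set (Euc n)) (u : Euc n → ℝ) {r : ℝ} (hr : 0 < r) :
    0 ≤ SP Ω u r :=
  div_nonneg (sub_nonneg.mpr (le_max_right _ _)) hr.le


lemma upper_cone {n : ℕ} {A : Set (Euc n)} (hAcl : IsClosed A) (hAbd : IsBounded A)
    (h0A : (0 : Euc n) ∈ A) (hA1 : A ⊆ ball 0 1)
    {u : Euc n → ℝ} (hu : ContinuousOn u (closure Aᶜ)) (hup : CmpAbove Aᶜ u)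
    {x : Euc n} (hx : x ∈ Aᶜ) {r θ : ℝ} (hr1 : 1 < r) (hrx : ‖x‖ < r) (hθ : 0 < θ) :
    u x ≤ SP Aᶜ u r * ‖x‖ + (mP Aᶜ u + θ) := by
  have hr0 : (0:ℝ) < r := by linarith
  have hAcp : IsCompact A := Metric.isCompact_of_isClosed_isBounded hAcl hAbd
  have hFs : frontier Aᶜ ⊆ A := by
    rw [frontier_compl]
    exact frontier_subset_closure.trans hAcl.closure_subset
  have hFrcl : frontier Aᶜ ⊆ closure Aᶜ := frontier_subset_closure
  have hFcp : IsCompact (frontier Aᶜ) := hAcp.of_isClosed_subset isClosed_frontier hFs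
  have hmPb : ∀ w ∈ frontier Aᶜ, u w ≤ mP Aᶜ u := fun w hw =>
    le_csSup (hFcp.bddAbove_image (hu.mono hFrcl)) (mem_image_of_mem _ hw)
  -- uniform continuity on K
  set K : Set (Euc n) := closure Aᶜ ∩ closedBall (0 : Euc n) 2 with hK
  have hKcp : IsCompact K := (isCompact_closedBall (0:Euc n) 2).of_isClosed_subset
    (isClosed_closure.inter Metric.isClosed_closedBall) inter_subset_right
  have hUC := hKcp.uniformContinuousOn_of_continuous (hu.mono inter_subset_left)
  rw [Metric.uniformContinuousOn_iff] at hUC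
  obtain ⟨δ, hδ0, hδ⟩ := hUC θ hθ
  have hdx : 0 < infDist x A := (hAcl.notMem_iff_infDist_pos ⟨0, h0A⟩).mp hx
  set ε : ℝ := min (δ/2) (min 1 (infDist x A / 2)) with hε
  have hε0 : 0 < ε := by positivity
  have hε1 : ε ≤ 1 := le_trans (min_le_right _ _) (min_le_left _ _)
  have hεδ : ε < δ := lt_of_le_of_lt (min_le_left _ _) (by linarith)
  have hεx : ε < infDist x A := lt_of_le_of_lt (le_trans (min_le_right _ _) (min_le_right _ _)) (by linarith)
  set W : Set (Euc n) := {y | ε < infDist y A} with hW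
  have hWopen : IsOpen W := isOpen_lt continuous_const (continuous_infDist_pt A)
  set V : Set (Euc n) := ball (0 : Euc n) r ∩ W with hV
  have hVopen : IsOpen V := isOpen_ball.inter hWopen
  have hVbd : IsBounded V := isBounded_ball.subset inter_subset_left
  have hclW : closure W ⊆ {y | ε ≤ infDist y A} :=
    closure_minimal (fun y hy => show ε ≤ infDist y A from le_of_lt hy)
      (isClosed_le continuous_const (continuous_infDist_pt A))
  have hclV : closure V ⊆ Aᶜ := by
    intro y hy
    have h1 : ε ≤ infDist y A := hclW ((closure_mono inter_subset_right) hy)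
    intro hyA
    rw [infDist_zero_of_mem hyA] at h1
    linarith
  have h0V : (0 : Euc n) ∉ V := by
    intro h
    have := h.2
    rw [hW, mem_setOf_eq, infDist_zero_of_mem h0A] at this
    linarith
  have hxV : x ∈ V := ⟨mem_ball_zero_iff.mpr hrx, hεx⟩
  -- boundary estimate
  have hb : ∀ z ∈ frontier (V \ {(0:Euc n)}), u z ≤ SP Aᶜ u r * ‖z - 0‖ + (mP Aᶜ u + θ) := by
    intro z hz
    rw [Set.diff_singleton_eq_self h0V] at hz
    have hSP0 : 0 ≤ SP Aᶜ u r := SP_nonneg _ _ hr0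
    have hmax : max (sSup (u '' sphere (0:Euc n) r)) (mP Aᶜ u) = SP Aᶜ u r * r + mP Aᶜ u := by
      rw [SP, div_mul_cancel₀ _ (ne_of_gt hr0)]; ring
    rcases frontier_inter_subset (ball (0:Euc n) r) W hz with ⟨hz1, _⟩ | ⟨_, hz2⟩
    · rw [frontier_ball (0:Euc n) (ne_of_gt hr0)] at hz1
      have hzn : ‖z - 0‖ = r := by
        rw [sub_zero]; exact mem_sphere_zero_iff_norm.mp hz1
      have h1 : u z ≤ sSup (u '' sphere (0:Euc n) r) :=
        le_csSup ((isCompact_sphere _ _).bddAbove_image (hu.mono (sphere_sub_cl hA1 hr1.le)))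
          (mem_image_of_mem _ hz1)
      have h2 : sSup (u '' sphere (0:Euc n) r) ≤ SP Aᶜ u r * r + mP Aᶜ u := by
        rw [← hmax]; exact le_max_left _ _
      rw [hzn]; linarith
    · -- inner boundary
      have hzε : infDist z A = ε := by
        have h1 : ε ≤ infDist z A := hclW hz2.1
        have h2 : z ∉ W := by rw [← hWopen.interior_eq]; exact hz2.2
        rw [hW, mem_setOf_eq, not_lt] at h2
        linarith
      have hzA : z ∉ A := by
        intro h; rw [infDist_zero_of_mem h] at hzε; linarith
      obtain ⟨y, hyA, hyd⟩ := hAcp.exists_infDist_eq_dist ⟨0, h0A⟩ z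
      have hdzy : dist z y = ε := by rw [← hyd, hzε]
      have hy1 : ‖y‖ < 1 := mem_ball_zero_iff.mp (hA1 hyA)
      -- y ∈ closure Aᶜ
      have hycl : y ∈ closure Aᶜ := by
        rw [Metric.mem_closure_iff]
        intro η hη
        set t : ℝ := min (η / (2 * ε)) 1 with ht
        have ht0 : 0 < t := by positivity
        have ht1 : t ≤ 1 := min_le_right _ _
        refine ⟨y + t • (z - y), ?_, ?_⟩
        · -- not in A
          intro hmem
          have hle : infDist z A ≤ dist z (y + t • (z - y)) := infDist_le_dist_of_mem hmem
          have heq : z - (y + t • (z - y)) = (1 - t) • (z - y) := by module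
          have hzy : ‖z - y‖ = ε := by rw [← dist_eq_norm]; exact hdzy
          rw [dist_eq_norm, heq, norm_smul, hzy, Real.norm_eq_abs,
            abs_of_nonneg (by linarith)] at hle
          rw [hzε] at hle
          nlinarith
        · have heq : y - (y + t • (z - y)) = (-t) • (z - y) := by module
          have hzy : ‖z - y‖ = ε := by rw [← dist_eq_norm]; exact hdzy
          rw [dist_eq_norm, heq, norm_smul, hzy, Real.norm_eq_abs, abs_neg,
            abs_of_nonneg ht0.le]
          have h2 : t ≤ η / (2 * ε) := min_le_left _ _
          have : t * ε ≤ η / 2 := by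
            calc t * ε ≤ η / (2 * ε) * ε := mul_le_mul_of_nonneg_right h2 hε0.le
            _ = η / 2 := by field_simp
          linarith
      have hyF : y ∈ frontier Aᶜ :=
        ⟨hycl, by rw [IsOpen.interior_eq hAcl.isOpen_compl]; exact fun h => h hyA⟩
      have hzcl : z ∈ closure Aᶜ := subset_closure hzA
      have hz2 : ‖z‖ ≤ 2 := by
        have h1 : dist z (0:Euc n) ≤ dist z y + dist y 0 := dist_triangle _ _ _
        rw [dist_zero_right, dist_zero_right, hdzy] at h1
        linarith
      have hmemz : z ∈ K := ⟨hzcl, by rwa [mem_closedBall, dist_zero_right]⟩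
      have hmemy : y ∈ K := ⟨hycl, by rw [mem_closedBall, dist_zero_right]; linarith⟩
      have hd : dist z y < δ := by rw [hdzy]; exact hεδ
      have huzy := hδ z hmemz y hmemy hd
      rw [Real.dist_eq] at huzy
      have h1 : u y ≤ mP Aᶜ u := hmPb y hyF
      have h2 : 0 ≤ SP Aᶜ u r * ‖z - 0‖ := mul_nonneg hSP0 (norm_nonneg _)
      have h3 : |u z - u y| < θ := huzy
      have h4 : u z - u y ≤ |u z - u y| := le_abs_self _
      linarith
  have := hup V hVopen hVbd hclV 0 (SP Aᶜ u r) (mP Aᶜ u + θ) hb x hxV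
  simpa using this

lemma upper_all {n : ℕ} {A : Set (Euc n)} (hAcl : IsClosed A) (hAbd : IsBounded A)
    (h0A : (0 : Euc n) ∈ A) (hA1 : A ⊆ ball 0 1)
    {u : Euc n → ℝ} (hu : ContinuousOn u (closure Aᶜ)) (hup : CmpAbove Aᶜ u)
    {Sp : ℝ} (hSp : Tendsto (SP Aᶜ u) atTop (𝓝 Sp)) :
    ∀ x ∈ Aᶜ, u x ≤ mP Aᶜ u + Sp * ‖x‖ := by
  intro x hx
  have key : ∀ θ > 0, u x ≤ mP Aᶜ u + Sp * ‖x‖ + θ := by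
    intro θ hθ
    have h1 : Tendsto (fun r => SP Aᶜ u r * ‖x‖ + (mP Aᶜ u + θ)) atTop
        (𝓝 (Sp * ‖x‖ + (mP Aᶜ u + θ))) := (hSp.mul_const _).add_const _
    have h2 : ∀ᶠ r in atTop, u x ≤ SP Aᶜ u r * ‖x‖ + (mP Aᶜ u + θ) := by
      filter_upwards [eventually_gt_atTop (max (‖x‖) 1)] with r hr
      exact upper_cone hAcl hAbd h0A hA1 hu hup hx
        (lt_of_le_of_lt (le_max_right _ _) hr) (lt_of_le_of_lt (le_max_left _ _) hr) hθ
    have := ge_of_tendsto h1 h2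
    linarith
  linarith [le_of_forall_pos_le_add (by intro θ hθ; linarith [key θ hθ] :
    ∀ θ > 0, u x ≤ (mP Aᶜ u + Sp * ‖x‖) + θ)]


lemma neg_transfer {n : ℕ} (hn : 0 < n) {A : Set (Euc n)} (hAcl : IsClosed A)
    (hAbd : IsBounded A) (h0A : (0 : Euc n) ∈ A) (hA1 : A ⊆ ball 0 1)
    {u : Euc n → ℝ} (hu : ContinuousOn u (closure Aᶜ)) :
    mP Aᶜ (fun y => -u y) = - mM Aᶜ u ∧ ∀ r ≥ (1:ℝ), SP Aᶜ (fun y => -u y) r = SM Aᶜ u r := by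
  haveI : Nonempty (Fin n) := ⟨⟨0, hn⟩⟩
  have hAcp : IsCompact A := Metric.isCompact_of_isClosed_isBounded hAcl hAbd
  have hFs : frontier Aᶜ ⊆ A := by
    rw [frontier_compl]; exact frontier_subset_closure.trans hAcl.closure_subset
  have hFrcl : frontier Aᶜ ⊆ closure Aᶜ := frontier_subset_closure
  have hFcp : IsCompact (frontier Aᶜ) := hAcp.of_isClosed_subset isClosed_frontier hFs
  have hFne : (frontier Aᶜ).Nonempty := by
    rw [frontier_compl]
    obtain ⟨p, hp⟩ : (sphere (0:Euc n) 2).Nonempty := NormedSpace.sphere_nonempty.mpr (by norm_num)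
    rw [mem_sphere_zero_iff_norm] at hp
    refine nonempty_frontier_iff.mpr ⟨⟨0, h0A⟩, ?_⟩
    intro h
    have : p ∈ A := h ▸ mem_univ p
    have := mem_ball_zero_iff.mp (hA1 this)
    rw [hp] at this; linarith
  have himg : ∀ S : Set (Euc n), (fun y => -u y) '' S = -(u '' S) := by
    intro S; rw [← Set.image_neg_eq_neg, Set.image_image]
  have hmPv : mP Aᶜ (fun y => -u y) = - mM Aᶜ u := by
    rw [mP, mM, himg, csSup_neg (hFne.image u) (hFcp.bddBelow_image (hu.mono hFrcl))]
  refine ⟨hmPv, fun r hr => ?_⟩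
  have hSne : (sphere (0:Euc n) r).Nonempty := NormedSpace.sphere_nonempty.mpr (by linarith)
  have hSsub : sphere (0:Euc n) r ⊆ closure Aᶜ := sphere_sub_cl hA1 hr
  rw [SP, SM, himg, csSup_neg (hSne.image u)
      ((isCompact_sphere _ _).bddBelow_image (hu.mono hSsub)), hmPv, max_neg_neg]
  ring


lemma lower_all {n : ℕ} (hn : 0 < n) {A : Set (Euc n)} (hAcl : IsClosed A) (hAbd : IsBounded A)
    (h0A : (0 : Euc n) ∈ A) (hA1 : A ⊆ ball 0 1)
    {u : Euc n → ℝ} (hu : ContinuousOn u (closure Aᶜ)) (hlo : CmpBelow Aᶜ u)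
    {Sm : ℝ} (hSm : Tendsto (SM Aᶜ u) atTop (𝓝 Sm)) :
    ∀ x ∈ Aᶜ, mM Aᶜ u - Sm * ‖x‖ ≤ u x := by
  obtain ⟨hmPv, hSPv⟩ := neg_transfer hn hAcl hAbd h0A hA1 hu
  have hvcont : ContinuousOn (fun y => -u y) (closure Aᶜ) := hu.neg
  have hvup : CmpAbove Aᶜ (fun y => -u y) := by
    intro V hVo hVb hVc x₀ a b hb x hxV
    have hb' : ∀ z ∈ frontier (V \ {x₀}), (-a) * ‖z - x₀‖ + (-b) ≤ u z := by
      intro z hz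
      have h1 := hb z hz
      have h2 : (-a) * ‖z - x₀‖ + (-b) = -(a * ‖z - x₀‖ + b) := by ring
      simp only at h1
      linarith
    have := hlo V hVo hVb hVc x₀ (-a) (-b) hb' x hxV
    have h2 : (-a) * ‖x - x₀‖ + (-b) = -(a * ‖x - x₀‖ + b) := by ring
    simp only
    linarith
  have hvT : Tendsto (SP Aᶜ (fun y => -u y)) atTop (𝓝 Sm) := by
    refine hSm.congr' ?_
    filter_upwards [eventually_ge_atTop (1:ℝ)] with r hr
    exact (hSPv r hr).symm
  intro x hx
  have := upper_all hAcl hAbd h0A hA1 hvcont hvup hvT x hx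
  rw [hmPv] at this
  have h3 : -u x ≤ - mM Aᶜ u + Sm * ‖x‖ := this
  linarith


lemma limsup_ge_aux {n : ℕ} (hn : 0 < n) {A : Set (Euc n)} (hAcl : IsClosed A)
    (hAbd : IsBounded A) (h0A : (0 : Euc n) ∈ A) (hA1 : A ⊆ ball 0 1)
    {u : Euc n → ℝ} (hu : ContinuousOn u (closure Aᶜ))
    (hgrow : IsBoundedUnder (· ≤ ·) (cobounded (Euc n)) fun x => |u x| / ‖x‖)
    {Sp : ℝ} (hSp : Tendsto (SP Aᶜ u) atTop (𝓝 Sp)) :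
    Sp ≤ limsup (fun x => |u x| / ‖x‖) (cobounded (Euc n)) := by
  haveI : Nonempty (Fin n) := ⟨⟨0, hn⟩⟩
  have h0lim : (0:ℝ) ≤ limsup (fun x => |u x| / ‖x‖) (cobounded (Euc n)) :=
    le_limsup_of_frequently_le (Frequently.of_forall fun x => by positivity) hgrow
  rcases le_or_gt Sp 0 with h | h
  · exact h.trans h0lim
  refine le_of_forall_lt_imp_le_of_dense fun c hc => ?_
  rcases le_or_gt c 0 with hc0 | hc0
  · exact hc0.trans h0lim
  refine le_limsup_of_frequently_le ?_ hgrow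
  rw [frequently_iff]
  intro U hU
  have hUb : IsBounded Uᶜ := by
    rw [← isCobounded_def] at hU; exact isBounded_compl_iff.mpr hU
  obtain ⟨R, hR⟩ := hUb.subset_closedBall 0
  have hev1 : ∀ᶠ r in atTop, 0 < SP Aᶜ u r := hSp.eventually (eventually_gt_nhds h)
  have hev2 : Tendsto (fun r => SP Aᶜ u r - |mP Aᶜ u| * r⁻¹) atTop (𝓝 (Sp - |mP Aᶜ u| * 0)) :=
    hSp.sub (tendsto_inv_atTop_zero.const_mul _)
  have hev2' : ∀ᶠ r in atTop, c < SP Aᶜ u r - |mP Aᶜ u| * r⁻¹ :=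
    hev2.eventually (eventually_gt_nhds (by rw [mul_zero]; linarith))
  obtain ⟨r, hSPr, hcr, hrR⟩ := (hev1.and (hev2'.and (eventually_gt_atTop (max R 1)))).exists
  have hr1 : (1:ℝ) < r := lt_of_le_of_lt (le_max_right _ _) hrR
  have hrR' : R < r := lt_of_le_of_lt (le_max_left _ _) hrR
  have hr0 : (0:ℝ) < r := by linarith
  have hSsub : sphere (0:Euc n) r ⊆ closure Aᶜ := sphere_sub_cl hA1 hr1.le
  obtain ⟨z, hzS, hzmax⟩ := (isCompact_sphere (0:Euc n) r).exists_sSup_image_eq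
    (NormedSpace.sphere_nonempty.mpr hr0.le) (hu.mono hSsub)
  have hzn : ‖z‖ = r := mem_sphere_zero_iff_norm.mp hzS
  have hmax : max (sSup (u '' sphere (0:Euc n) r)) (mP Aᶜ u) = SP Aᶜ u r * r + mP Aᶜ u := by
    rw [SP, div_mul_cancel₀ _ (ne_of_gt hr0)]; ring
  have hmPlt : mP Aᶜ u < max (sSup (u '' sphere (0:Euc n) r)) (mP Aᶜ u) := by nlinarith
  have hmaxM : max (sSup (u '' sphere (0:Euc n) r)) (mP Aᶜ u) = sSup (u '' sphere (0:Euc n) r) := by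
    rcases max_choice (sSup (u '' sphere (0:Euc n) r)) (mP Aᶜ u) with he | he
    · exact he
    · rw [he] at hmPlt; exact absurd hmPlt (lt_irrefl _)
  have huz : u z = SP Aᶜ u r * r + mP Aᶜ u := by rw [← hzmax, ← hmaxM, hmax]
  refine ⟨z, ?_, ?_⟩
  · by_contra hzU
    have h5 := hR (hzU : z ∈ Uᶜ)
    rw [mem_closedBall, dist_zero_right, hzn] at h5
    linarith
  · have key : SP Aᶜ u r - |mP Aᶜ u| * r⁻¹ ≤ u z / r := by
      rw [huz, add_div, mul_div_cancel_right₀ _ (ne_of_gt hr0)]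
      have h6 := (div_le_div_iff_of_pos_right hr0).mpr (neg_abs_le (mP Aᶜ u))
      have h7 : -|mP Aᶜ u| * r⁻¹ = -|mP Aᶜ u| / r := by rw [div_eq_mul_inv]
      linarith
    have h8 : u z / r ≤ |u z| / ‖z‖ := by
      rw [hzn]
      exact (div_le_div_iff_of_pos_right hr0).mpr (le_abs_self _)
    have h9 : c ≤ |u z| / ‖z‖ := by linarith
    exact h9

/-- S_∞ = limsup_{x→∞} |u(x)|/|x| and m⁻ − S⁻_∞|x| ≤ u(x) ≤ m⁺ + S⁺_∞|x| in Ω. -/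
theorem stmt1 {n : ℕ} (hn : 0 < n) (A : Set (Euc n)) (hAcl : IsClosed A) (hAbd : IsBounded A)
    (h0A : (0 : Euc n) ∈ A) (hA1 : A ⊆ ball 0 1)
    (u : Euc n → ℝ) (hu : ContinuousOn u (closure Aᶜ)) (hIH : InfHarmonic Aᶜ u)
    (hgrow : IsBoundedUnder (· ≤ ·) (cobounded (Euc n)) fun x => |u x| / ‖x‖)
    (Sp Sm : ℝ) (hSp : Tendsto (SP Aᶜ u) atTop (𝓝 Sp))
    (hSm : Tendsto (SM Aᶜ u) atTop (𝓝 Sm)) :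
    max Sp Sm = limsup (fun x => |u x| / ‖x‖) (cobounded (Euc n)) ∧
      ∀ x ∈ Aᶜ, mM Aᶜ u - Sm * ‖x‖ ≤ u x ∧ u x ≤ mP Aᶜ u + Sp * ‖x‖ := by
  haveI : Nonempty (Fin n) := ⟨⟨0, hn⟩⟩
  have hupper := upper_all hAcl hAbd h0A hA1 hu hIH.1 hSp
  have hlower := lower_all hn hAcl hAbd h0A hA1 hu hIH.2 hSm
  have hSp0 : 0 ≤ Sp := ge_of_tendsto hSp (by
    filter_upwards [eventually_gt_atTop (0:ℝ)] with r hr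
    exact SP_nonneg _ _ hr)
  have hSm0 : 0 ≤ Sm := by
    obtain ⟨hmPv, hSPv⟩ := neg_transfer hn hAcl hAbd h0A hA1 hu
    have hvT : Tendsto (SP Aᶜ (fun y => -u y)) atTop (𝓝 Sm) := by
      refine hSm.congr' ?_
      filter_upwards [eventually_ge_atTop (1:ℝ)] with r hr
      exact (hSPv r hr).symm
    exact ge_of_tendsto hvT (by
      filter_upwards [eventually_gt_atTop (0:ℝ)] with r hr
      exact SP_nonneg _ _ hr)
  refine ⟨?_, fun x hx => ⟨hlower x hx, hupper x hx⟩⟩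
  set S := max Sp Sm with hS
  set f : Euc n → ℝ := fun x => |u x| / ‖x‖ with hf
  -- upper estimate on limsup
  have hle1 : limsup f (cobounded (Euc n)) ≤ S := by
    set C : ℝ := |mP Aᶜ u| + |mM Aᶜ u| with hC
    set g : Euc n → ℝ := fun x => C * ‖x‖⁻¹ + S with hg
    have hfg : f ≤ᶠ[cobounded (Euc n)] g := by
      filter_upwards [tendsto_norm_cobounded_atTop.eventually_ge_atTop 1] with x hx1
      have hx0 : (0:ℝ) < ‖x‖ := by linarith
      have hxA : x ∈ Aᶜ := by
        intro hxA
        have := mem_ball_zero_iff.mp (hA1 hxA); linarith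
      have h1 := hupper x hxA
      have h2 := hlower x hxA
      have hSpS : Sp * ‖x‖ ≤ S * ‖x‖ := mul_le_mul_of_nonneg_right (le_max_left _ _) hx0.le
      have hSmS : Sm * ‖x‖ ≤ S * ‖x‖ := mul_le_mul_of_nonneg_right (le_max_right _ _) hx0.le
      have habs : |u x| ≤ C + S * ‖x‖ := by
        rw [abs_le]
        constructor
        · have := neg_abs_le (mM Aᶜ u)
          have := abs_nonneg (mP Aᶜ u)
          rw [hC]; linarith
        · have := le_abs_self (mP Aᶜ u)
          have := abs_nonneg (mM Aᶜ u)
          rw [hC]; linarith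
      have : f x ≤ (C + S * ‖x‖) / ‖x‖ := by
        rw [hf]
        exact (div_le_div_iff_of_pos_right hx0).mpr habs
      have heq : (C + S * ‖x‖) / ‖x‖ = C * ‖x‖⁻¹ + S := by
        field_simp
      rw [hg]
      simp only
      linarith [heq ▸ this]
    have hgT : Tendsto g (cobounded (Euc n)) (𝓝 (C * 0 + S)) :=
      ((tendsto_norm_cobounded_atTop.inv_tendsto_atTop).const_mul C).add_const S
    have hfcb : IsCoboundedUnder (· ≤ ·) (cobounded (Euc n)) f := by
      refine IsBoundedUnder.isCoboundedUnder_le ⟨0, ?_⟩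
      rw [eventually_map]
      exact Eventually.of_forall fun x => by positivity
    calc limsup f (cobounded (Euc n)) ≤ limsup g (cobounded (Euc n)) :=
          limsup_le_limsup hfg hfcb hgT.isBoundedUnder_le
    _ = C * 0 + S := hgT.limsup_eq
    _ = S := by ring
  have hle2 : S ≤ limsup f (cobounded (Euc n)) := by
    refine max_le ?_ ?_
    · exact limsup_ge_aux hn hAcl hAbd h0A hA1 hu hgrow hSp
    · obtain ⟨hmPv, hSPv⟩ := neg_transfer hn hAcl hAbd h0A hA1 hu
      have hvT : Tendsto (SP Aᶜ (fun y => -u y)) atTop (𝓝 Sm) := by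
        refine hSm.congr' ?_
        filter_upwards [eventually_ge_atTop (1:ℝ)] with r hr
        exact (hSPv r hr).symm
      have := limsup_ge_aux hn hAcl hAbd h0A hA1 hu.neg
        (by simpa only [Pi.neg_apply, abs_neg] using hgrow) hvT
      simpa only [Pi.neg_apply, abs_neg] using this
  exact le_antisymm hle2 hle1
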